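/- (Dual operator system and biduality) Let C be an abstract operator system on a finite-dimensional real vector space X. For each s ≥ 1 define C^∨(s) ⊆ X' ⊗ Her_s as the set of all tensors Ψ ∈ X' ⊗ Her_s, regarded as linear maps X → Her_s, satisfying ⟨Ψ, A⟩ ≥ 0 for all A ∈ C(s), where the pairing between Lin(X, Her_s) and X ⊗ Her_s is ⟨Ψ, x ⊗ B⟩ := tr(Ψ(x)·B^T). Then C^∨ is an abstract operator system on the dual space X', and under the canonical identification X ≅ X'' one has (C^∨)^∨ = C. -/

import Mathlib

open Matrix
open scoped TensorProduct Kronecker ComplexOrder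

noncomputable section

/-- `Her_k`: the real vector space of Hermitian complex matrices indexed by `k`. -/
abbrev HM (k : Type*) [Fintype k] [DecidableEq k] : Type _ := selfAdjoint (Matrix k k ℂ)

section Infrastructure

variable {I J : Type*} [Fintype I] [DecidableEq I] [Fintype J] [DecidableEq J]

/-- The compression map `B ↦ M^* B M : Her_I → Her_J` (ℝ-linear). -/
def compr (M : Matrix I J ℂ) : HM I →ₗ[ℝ] HM J where
  toFun B := ⟨Mᴴ * B.1 * M, Matrix.isHermitian_conjTranspose_mul_mul M B.2⟩
  map_add' A B := Subtype.ext (by simp [Matrix.mul_add, Matrix.add_mul])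
  map_smul' r A := Subtype.ext (by simp [Matrix.mul_smul, Matrix.smul_mul])

/-- The Kronecker product of Hermitian matrices. -/
def kronHerm (A : HM I) (B : HM J) : HM (I × J) :=
  ⟨A.1 ⊗ₖ B.1, by
    have hA : (A.1)ᴴ = A.1 := A.2
    have hB : (B.1)ᴴ = B.1 := B.2
    show star _ = _
    rw [Matrix.star_eq_conjTranspose]
    ext ⟨i1, i2⟩ ⟨j1, j2⟩
    simp only [Matrix.conjTranspose_apply, Matrix.kroneckerMap_apply, star_mul']
    rw [← Matrix.conjTranspose_apply, ← Matrix.conjTranspose_apply, hA, hB, mul_comm]⟩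

def kronBil : HM I →ₗ[ℝ] HM J →ₗ[ℝ] HM (I × J) :=
  LinearMap.mk₂ ℝ kronHerm
    (fun A A' B => Subtype.ext (by simp [kronHerm, Matrix.add_kronecker]))
    (fun r A B => Subtype.ext (by simp [kronHerm, Matrix.smul_kronecker]))
    (fun A B B' => Subtype.ext (by simp [kronHerm, Matrix.kronecker_add]))
    (fun r A B => Subtype.ext (by simp [kronHerm, Matrix.kronecker_smul]))

/-- The identification `Her_I ⊗ Her_J ≅ Her_{I×J}` (via the Kronecker product),
as a linear map. -/
def kron : TensorProduct ℝ (HM I) (HM J) →ₗ[ℝ] HM (I × J) :=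
  TensorProduct.lift kronBil

end Infrastructure

/-- A proper cone: a convex cone that is closed (equivalently, by the bipolar theorem in
finite dimensions, equal to its double dual cone), sharp, and full. -/
def IsProperCone {M : Type*} [AddCommGroup M] [Module ℝ M] (C : Set M) : Prop :=
  (∀ x ∈ C, ∀ y ∈ C, x + y ∈ C) ∧ (∀ r : ℝ, 0 ≤ r → ∀ x ∈ C, r • x ∈ C) ∧
  (∀ x, (∀ f : Module.Dual ℝ M, (∀ c ∈ C, 0 ≤ f c) → 0 ≤ f x) → x ∈ C) ∧
  (∀ x ∈ C, -x ∈ C → x = 0) ∧ (∀ x : M, ∃ a ∈ C, ∃ b ∈ C, x = a - b)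

/-- An abstract operator system on a real vector space `X`: a proper cone
`cone s ⊆ X ⊗ Her_s` for every level `s`, compatible with all matrix compressions. -/
structure AOS (X : Type*) [AddCommGroup X] [Module ℝ X] where
  cone : ∀ s : ℕ, Set (TensorProduct ℝ X (HM (Fin s)))
  proper : ∀ s, IsProperCone (cone s)
  compat : ∀ (s t : ℕ) (M : Matrix (Fin s) (Fin t) ℂ), ∀ A ∈ cone s,
    TensorProduct.map LinearMap.id (compr M) A ∈ cone t

/-- The pairing between `Lin(Y, Her_s)` and `Y ⊗ Her_s` given by
`⟨Ψ, y ⊗ B⟩ = tr(Ψ(y)·Bᵀ)` (a real number). -/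
def herPair {Y : Type*} [AddCommGroup Y] [Module ℝ Y] {s : ℕ}
    (Ψ : Y →ₗ[ℝ] HM (Fin s)) : TensorProduct ℝ Y (HM (Fin s)) →ₗ[ℝ] ℝ :=
  TensorProduct.lift <| LinearMap.mk₂ ℝ
    (fun y B => (Matrix.trace ((Ψ y).1 * (B.1)ᵀ)).re)
    (fun y y' B => by simp [Matrix.add_mul])
    (fun r y B => by simp [Matrix.smul_mul])
    (fun y B B' => by simp [Matrix.mul_add])
    (fun r y B => by simp [Matrix.mul_smul])

/-- The dual system: the level-`s` cone consists of the tensors `Ψ ∈ Y' ⊗ Her_s`, regarded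
as linear maps `Y → Her_s` via `Y' ⊗ Her_s ≅ Lin(Y, Her_s)`, pairing nonnegatively with
every element of the level-`s` cone. -/
def dualSysCone (Y : Type*) [AddCommGroup Y] [Module ℝ Y] [FiniteDimensional ℝ Y]
    (Cn : ∀ s : ℕ, Set (TensorProduct ℝ Y (HM (Fin s)))) (s : ℕ) :
    Set (TensorProduct ℝ (Module.Dual ℝ Y) (HM (Fin s))) :=
  {Ψ | ∀ A ∈ Cn s, 0 ≤ herPair (dualTensorHomEquiv ℝ Y (HM (Fin s)) Ψ) A}

set_option maxHeartbeats 1000000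
set_option synthInstance.maxHeartbeats 200000

section MyInfra

variable {k : Type*} [Fintype k] [DecidableEq k]

/-- The trace pairing `(A, B) ↦ Re tr(A Bᵀ)` on Hermitian matrices, as a bilinear map. -/
def herβ : HM k →ₗ[ℝ] HM k →ₗ[ℝ] ℝ :=
  LinearMap.mk₂ ℝ (fun A B => (Matrix.trace (A.1 * (B.1)ᵀ)).re)
    (fun A A' B => by simp [Matrix.add_mul])
    (fun r A B => by simp [Matrix.smul_mul])
    (fun A B B' => by simp [Matrix.mul_add])
    (fun r A B => by simp [Matrix.mul_smul])

lemma herβ_apply (A B : HM k) : herβ A B = (Matrix.trace (A.1 * (B.1)ᵀ)).re := rfl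

lemma herβ_comm (A B : HM k) : herβ A B = herβ B A := by
  rw [herβ_apply, herβ_apply, ← Matrix.trace_transpose (A.1 * (B.1)ᵀ),
    Matrix.transpose_mul, Matrix.transpose_transpose]

/-- The conjugate (= transpose) of a Hermitian matrix. -/
def conjHM (A : HM k) : HM k := ⟨(A.1)ᵀ, (Matrix.IsHermitian.transpose A.2 : _)⟩

lemma herβ_conj_self (A : HM k) :
    herβ A (conjHM A) = ∑ i, ∑ j, Complex.normSq (A.1 i j) := by
  rw [herβ_apply]
  have : (A.1 * ((conjHM A).1)ᵀ) = A.1 * A.1 := by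
    simp [conjHM]
  rw [this]
  have hherm : (A.1)ᴴ = A.1 := A.2
  have htr : Matrix.trace (A.1 * A.1) = ∑ i, ∑ j, (Complex.normSq (A.1 i j) : ℂ) := by
    rw [Matrix.trace]
    simp only [Matrix.diag_apply, Matrix.mul_apply]
    refine Finset.sum_congr rfl fun i _ => Finset.sum_congr rfl fun j _ => ?_
    have : A.1 j i = star (A.1 i j) := by
      conv_lhs => rw [← hherm]
      simp [Matrix.conjTranspose_apply]
    rw [this]
    exact Complex.mul_conj _
  rw [htr]
  simp

lemma herβ_right_nondeg {A : HM k} (h : ∀ B : HM k, herβ A B = 0) : A = 0 := by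
  have h0 := h (conjHM A)
  rw [herβ_conj_self] at h0
  have hz : ∀ i ∈ (Finset.univ : Finset k), ∀ j ∈ (Finset.univ : Finset k),
      Complex.normSq (A.1 i j) = 0 := by
    have h1 : ∀ i ∈ (Finset.univ : Finset k),
        ∑ j, Complex.normSq (A.1 i j) = 0 := by
      refine (Finset.sum_eq_zero_iff_of_nonneg fun i _ => ?_).mp h0
      exact Finset.sum_nonneg fun j _ => Complex.normSq_nonneg _
    intro i hi
    exact (Finset.sum_eq_zero_iff_of_nonneg
      fun j _ => Complex.normSq_nonneg _).mp (h1 i hi)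
  apply Subtype.ext
  ext i j
  simpa using Complex.normSq_eq_zero.mp (hz i (Finset.mem_univ i) j (Finset.mem_univ j))

lemma herβ_compr {s t : ℕ} (M : Matrix (Fin s) (Fin t) ℂ) (B : HM (Fin s))
    (B' : HM (Fin t)) : herβ (compr M B) B' = herβ B (compr Mᵀ B') := by
  rw [herβ_apply, herβ_apply]
  congr 1
  show Matrix.trace (Mᴴ * B.1 * M * (B'.1)ᵀ) = Matrix.trace (B.1 * ((Mᵀ)ᴴ * B'.1 * Mᵀ)ᵀ)
  have key : ((Mᵀ)ᴴ)ᵀ = Mᴴ := by ext i j; simp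
  have hrhs : ((Mᵀ)ᴴ * B'.1 * Mᵀ)ᵀ = M * ((B'.1)ᵀ * Mᴴ) := by
    rw [Matrix.transpose_mul, Matrix.transpose_mul, Matrix.transpose_transpose, key]
  rw [hrhs]
  simp only [Matrix.mul_assoc]
  rw [Matrix.trace_mul_comm]
  simp only [Matrix.mul_assoc]

variable (Y : Type*) [AddCommGroup Y] [Module ℝ Y] [FiniteDimensional ℝ Y] (s : ℕ)

/-- Inclusion of Hermitian matrices into matrices, as an `ℝ`-linear map. -/
def hmIncl : HM k →ₗ[ℝ] Matrix k k ℂ where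
  toFun := Subtype.val
  map_add' _ _ := rfl
  map_smul' _ _ := rfl

instance : FiniteDimensional ℝ (HM k) :=
  FiniteDimensional.of_injective (hmIncl (k := k)) Subtype.coe_injective

lemma herPair_tmul (Ψ : Y →ₗ[ℝ] HM (Fin s)) (y : Y) (B : HM (Fin s)) :
    herPair Ψ (y ⊗ₜ B) = herβ (Ψ y) B := rfl

/-- `herPair` as a linear map in `Ψ`. -/
def hpL : (Y →ₗ[ℝ] HM (Fin s)) →ₗ[ℝ]
    (TensorProduct ℝ Y (HM (Fin s)) →ₗ[ℝ] ℝ) where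
  toFun := herPair
  map_add' Ψ Φ := TensorProduct.ext' fun y B => by
    simp [herPair_tmul]
  map_smul' r Ψ := TensorProduct.ext' fun y B => by
    simp [herPair_tmul]

/-- The canonical pairing between `Y' ⊗ Her_s` and `Y ⊗ Her_s`, as a linear map into
the dual. -/
def tpair : TensorProduct ℝ (Module.Dual ℝ Y) (HM (Fin s)) →ₗ[ℝ]
    (TensorProduct ℝ Y (HM (Fin s)) →ₗ[ℝ] ℝ) :=
  (hpL Y s) ∘ₗ (dualTensorHomEquiv ℝ Y (HM (Fin s))).toLinearMap

lemma tpair_apply (Ψ : TensorProduct ℝ (Module.Dual ℝ Y) (HM (Fin s)))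
    (A : TensorProduct ℝ Y (HM (Fin s))) :
    tpair Y s Ψ A = herPair (dualTensorHomEquiv ℝ Y (HM (Fin s)) Ψ) A := rfl

lemma dte_tmul (f : Module.Dual ℝ Y) (B : HM (Fin s)) :
    dualTensorHomEquiv ℝ Y (HM (Fin s)) (f ⊗ₜ B) = dualTensorHom ℝ Y (HM (Fin s)) (f ⊗ₜ B) :=
  rfl

lemma tpair_tmul (f : Module.Dual ℝ Y) (B : HM (Fin s)) (y : Y) (B' : HM (Fin s)) :
    tpair Y s (f ⊗ₜ B) (y ⊗ₜ B') = f y * herβ B B' := by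
  rw [tpair_apply, dte_tmul, herPair_tmul, dualTensorHom_apply, LinearMap.map_smul]
  simp

lemma hpL_apply (Ψ : Y →ₗ[ℝ] HM (Fin s)) : hpL Y s Ψ = herPair Ψ := rfl

lemma tpair_injective : Function.Injective (tpair Y s) := by
  have h1 : Function.Injective (hpL Y s) := by
    refine (injective_iff_map_eq_zero _).mpr fun Ψ h => ?_
    refine LinearMap.ext fun y => ?_
    rw [LinearMap.zero_apply]
    refine herβ_right_nondeg fun B => ?_
    have := congrArg (fun g => g (y ⊗ₜ B)) h
    simpa [hpL_apply, herPair_tmul] using this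
  exact h1.comp (dualTensorHomEquiv ℝ Y (HM (Fin s))).injective

lemma tpair_bijective : Function.Bijective (tpair Y s) := by
  refine ⟨tpair_injective Y s, ?_⟩
  have h2 : Module.finrank ℝ (Module.Dual ℝ Y) = Module.finrank ℝ Y :=
    Subspace.dual_finrank_eq
  have hfr : Module.finrank ℝ (TensorProduct ℝ (Module.Dual ℝ Y) (HM (Fin s))) =
      Module.finrank ℝ (TensorProduct ℝ Y (HM (Fin s)) →ₗ[ℝ] ℝ) := by
    conv_rhs => rw [Module.finrank_linearMap, Module.finrank_self, mul_one]
    rw [Module.finrank_tensorProduct, Module.finrank_tensorProduct, h2]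
  have hr := LinearMap.finrank_range_of_inj (tpair_injective Y s)
  rw [← LinearMap.range_eq_top]
  exact Submodule.eq_top_of_finrank_eq (hr.trans hfr)

lemma tpair_flip_bijective : Function.Bijective (tpair Y s).flip := by
  have hinj : Function.Injective (tpair Y s).flip := by
    refine (injective_iff_map_eq_zero _).mpr fun A h => ?_
    refine (Module.forall_dual_apply_eq_zero_iff ℝ A).mp fun φ => ?_
    obtain ⟨Ψ, rfl⟩ := (tpair_bijective Y s).2 φ
    have := congrArg (fun g => g Ψ) h
    simpa using this
  refine ⟨hinj, ?_⟩
  haveI : FiniteDimensional ℝ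
      (TensorProduct ℝ (Module.Dual ℝ Y) (HM (Fin s)) →ₗ[ℝ] ℝ) :=
    Module.Finite.linearMap ℝ ℝ (TensorProduct ℝ (Module.Dual ℝ Y) (HM (Fin s))) ℝ
  have h2 : Module.finrank ℝ (Module.Dual ℝ Y) = Module.finrank ℝ Y :=
    Subspace.dual_finrank_eq
  have h1 : Module.finrank ℝ
        (TensorProduct ℝ (Module.Dual ℝ Y) (HM (Fin s)) →ₗ[ℝ] ℝ) =
      Module.finrank ℝ (TensorProduct ℝ (Module.Dual ℝ Y) (HM (Fin s))) :=
    Module.finrank_linearMap_self ℝ ℝ (TensorProduct ℝ (Module.Dual ℝ Y) (HM (Fin s)))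
  have hfr : Module.finrank ℝ (TensorProduct ℝ Y (HM (Fin s))) =
      Module.finrank ℝ (TensorProduct ℝ (Module.Dual ℝ Y) (HM (Fin s)) →ₗ[ℝ] ℝ) := by
    rw [h1, Module.finrank_tensorProduct, Module.finrank_tensorProduct, h2]
  exact (LinearMap.injective_iff_surjective_of_finrank_eq_finrank hfr).mp hinj

lemma mem_dualSysCone_iff (Cn : ∀ s : ℕ, Set (TensorProduct ℝ Y (HM (Fin s))))
    (Ψ : TensorProduct ℝ (Module.Dual ℝ Y) (HM (Fin s))) :
    Ψ ∈ dualSysCone Y Cn s ↔ ∀ A ∈ Cn s, 0 ≤ tpair Y s Ψ A := Iff.rfl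

lemma tpair_compr {t : ℕ} (M : Matrix (Fin s) (Fin t) ℂ)
    (Ψ : TensorProduct ℝ (Module.Dual ℝ Y) (HM (Fin s)))
    (A : TensorProduct ℝ Y (HM (Fin t))) :
    tpair Y t (TensorProduct.map LinearMap.id (compr M) Ψ) A =
      tpair Y s Ψ (TensorProduct.map LinearMap.id (compr Mᵀ) A) := by
  induction Ψ using TensorProduct.induction_on with
  | zero => simp
  | tmul f B =>
    induction A using TensorProduct.induction_on with
    | zero => simp
    | tmul y B' =>
      simp only [TensorProduct.map_tmul, LinearMap.id_coe, id_eq, tpair_tmul]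
      rw [herβ_compr]
    | add A₁ A₂ h₁ h₂ =>
      simp only [TensorProduct.map_tmul, LinearMap.id_coe, id_eq] at h₁ h₂
      simp [map_add, h₁, h₂]
  | add Ψ₁ Ψ₂ h₁ h₂ => simp [h₁, h₂]

end MyInfra

section MySymm

variable {X : Type*} [AddCommGroup X] [Module ℝ X] [FiniteDimensional ℝ X] (s : ℕ)

lemma tpair_symm (A : TensorProduct ℝ X (HM (Fin s)))
    (Ψ : TensorProduct ℝ (Module.Dual ℝ X) (HM (Fin s))) :
    tpair (Module.Dual ℝ X) s
      (TensorProduct.map (Module.Dual.eval ℝ X) LinearMap.id A) Ψ =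
    tpair X s Ψ A := by
  induction A using TensorProduct.induction_on with
  | zero => simp
  | tmul x B =>
    induction Ψ using TensorProduct.induction_on with
    | zero => simp
    | tmul f B' =>
      simp only [TensorProduct.map_tmul, LinearMap.id_coe, id_eq, tpair_tmul]
      rw [herβ_comm]
      rfl
    | add Ψ₁ Ψ₂ h₁ h₂ =>
      simp only [TensorProduct.map_tmul, LinearMap.id_coe, id_eq] at h₁ h₂
      simp [map_add, h₁, h₂]
  | add A₁ A₂ h₁ h₂ => simp [h₁, h₂]

end MySymm

/-- dual operator system and biduality: the level-wise dual `C^∨` of an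
abstract operator system `C` on `X` is an abstract operator system on `X'` (a proper cone at
each level, compatible with compressions), and under the canonical identification `X ≅ X''`
one has `(C^∨)^∨ = C`. -/
theorem dual_operator_system_biduality {X : Type*} [AddCommGroup X] [Module ℝ X]
    [FiniteDimensional ℝ X] (C : AOS X) :
    (∀ s : ℕ, IsProperCone (dualSysCone X C.cone s)) ∧
    (∀ (s t : ℕ) (M : Matrix (Fin s) (Fin t) ℂ), ∀ Ψ ∈ dualSysCone X C.cone s,
      TensorProduct.map LinearMap.id (compr M) Ψ ∈ dualSysCone X C.cone t) ∧
    (∀ s : ℕ, dualSysCone (Module.Dual ℝ X) (dualSysCone X C.cone) s =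
      TensorProduct.map (Module.Dual.eval ℝ X) LinearMap.id '' C.cone s) := by
  have memD : ∀ (s : ℕ) (Ψ : TensorProduct ℝ (Module.Dual ℝ X) (HM (Fin s))),
      Ψ ∈ dualSysCone X C.cone s ↔ ∀ A ∈ C.cone s, 0 ≤ tpair X s Ψ A :=
    fun s Ψ => mem_dualSysCone_iff X s C.cone Ψ
  have hzeroD : ∀ s : ℕ, (0 : TensorProduct ℝ (Module.Dual ℝ X) (HM (Fin s))) ∈
      dualSysCone X C.cone s := by
    intro s
    rw [memD]
    intro A hA
    simp
  refine ⟨?_, ?_, ?_⟩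
  · -- the dual cone is a proper cone at every level
    intro s
    refine ⟨?_, ?_, ?_, ?_, ?_⟩
    · -- closed under addition
      intro x hx y hy
      rw [memD] at hx hy ⊢
      intro A hA
      rw [map_add, LinearMap.add_apply]
      exact add_nonneg (hx A hA) (hy A hA)
    · -- closed under nonnegative scaling
      intro r hr x hx
      rw [memD] at hx ⊢
      intro A hA
      rw [LinearMap.map_smul, LinearMap.smul_apply, smul_eq_mul]
      exact mul_nonneg hr (hx A hA)
    · -- closed (equal to its double dual)
      intro x hx
      rw [memD]
      intro A hA
      have := hx ((tpair X s).flip A) (fun c hc => by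
        simpa [LinearMap.flip_apply] using (memD s c).mp hc A hA)
      simpa [LinearMap.flip_apply] using this
    · -- sharp
      intro x hx hnx
      rw [memD] at hx hnx
      have hzero : ∀ A ∈ C.cone s, tpair X s x A = 0 := by
        intro A hA
        have h1 := hx A hA
        have h2 := hnx A hA
        rw [map_neg, LinearMap.neg_apply] at h2
        linarith
      have hall : tpair X s x = tpair X s 0 := by
        rw [map_zero]
        refine LinearMap.ext fun A => ?_
        obtain ⟨a, ha, b, hb, rfl⟩ := (C.proper s).2.2.2.2 A
        rw [map_sub, hzero a ha, hzero b hb, sub_zero, LinearMap.zero_apply]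
      exact tpair_injective X s hall
    · -- full
      intro Φ
      let S : Submodule ℝ (TensorProduct ℝ (Module.Dual ℝ X) (HM (Fin s))) :=
        { carrier := {x | ∃ a ∈ dualSysCone X C.cone s,
            ∃ b ∈ dualSysCone X C.cone s, x = a - b}
          add_mem' := by
            rintro x y ⟨a, ha, b, hb, rfl⟩ ⟨a', ha', b', hb', rfl⟩
            refine ⟨a + a', ?_, b + b', ?_, by abel⟩
            · rw [memD]; intro A hA
              rw [map_add, LinearMap.add_apply]
              exact add_nonneg ((memD s a).mp ha A hA) ((memD s a').mp ha' A hA)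
            · rw [memD]; intro A hA
              rw [map_add, LinearMap.add_apply]
              exact add_nonneg ((memD s b).mp hb A hA) ((memD s b').mp hb' A hA)
          zero_mem' := ⟨0, hzeroD s, 0, hzeroD s, by simp⟩
          smul_mem' := by
            rintro r x ⟨a, ha, b, hb, rfl⟩
            have hsm : ∀ u : ℝ, 0 ≤ u → ∀ c ∈ dualSysCone X C.cone s,
                u • c ∈ dualSysCone X C.cone s := by
              intro u hu c hc
              rw [memD]; intro A hA
              rw [LinearMap.map_smul, LinearMap.smul_apply, smul_eq_mul]
              exact mul_nonneg hu ((memD s c).mp hc A hA)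
            rcases le_or_gt 0 r with h | h
            · exact ⟨r • a, hsm r h a ha, r • b, hsm r h b hb, by rw [smul_sub]⟩
            · refine ⟨(-r) • b, hsm _ (by linarith) b hb,
                (-r) • a, hsm _ (by linarith) a ha, ?_⟩
              module }
      have hS : S = ⊤ := by
        by_contra hne
        obtain ⟨v, hv⟩ : ∃ v, v ∉ S := by
          by_contra h
          push_neg at h
          exact hne (Submodule.eq_top_iff'.mpr h)
        obtain ⟨g, hgv, hgmap⟩ := Submodule.exists_dual_map_eq_bot_of_notMem (R := ℝ)
          (M := TensorProduct ℝ (Module.Dual ℝ X) (HM (Fin s))) (p := S) hv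
          inferInstance
        have hgS : ∀ x ∈ S, g x = 0 := by
          intro x hx
          have : g x ∈ S.map g := ⟨x, hx, rfl⟩
          simpa [hgmap] using this
        obtain ⟨A0, hA0⟩ := (tpair_flip_bijective X s).2 g
        have hA0val : ∀ Ψ ∈ dualSysCone X C.cone s, tpair X s Ψ A0 = 0 := by
          intro Ψ hΨ
          have hΨS : Ψ ∈ S := ⟨Ψ, hΨ, 0, hzeroD s, (sub_zero Ψ).symm⟩
          calc tpair X s Ψ A0 = (tpair X s).flip A0 Ψ := rfl
            _ = g Ψ := by rw [hA0]
            _ = 0 := hgS Ψ hΨS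
        have hmem : ∀ B, (∀ Ψ ∈ dualSysCone X C.cone s, tpair X s Ψ B = 0) →
            B ∈ C.cone s := by
          intro B hB
          apply (C.proper s).2.2.1
          intro f hf
          obtain ⟨Ψ, rfl⟩ := (tpair_bijective X s).2 f
          have hΨD : Ψ ∈ dualSysCone X C.cone s := (memD s Ψ).mpr hf
          rw [hB Ψ hΨD]
        have h1 : A0 ∈ C.cone s := hmem A0 hA0val
        have h2 : -A0 ∈ C.cone s := hmem (-A0) (fun Ψ hΨ => by
          rw [map_neg, hA0val Ψ hΨ, neg_zero])
        have hA00 : A0 = 0 := (C.proper s).2.2.2.1 A0 h1 h2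
        apply hgv
        have hg : (tpair X s).flip A0 = 0 := by rw [hA00, map_zero]
        rw [hA0] at hg
        rw [hg]
        simp
      have : Φ ∈ S := hS ▸ Submodule.mem_top
      exact this
  · -- compatibility with compressions
    intro s t M Ψ hΨ
    rw [memD] at hΨ ⊢
    intro A hA
    rw [tpair_compr]
    exact hΨ _ (C.compat t s Mᵀ A hA)
  · -- biduality
    intro s
    have memDD : ∀ Φ : TensorProduct ℝ (Module.Dual ℝ (Module.Dual ℝ X)) (HM (Fin s)),
        Φ ∈ dualSysCone (Module.Dual ℝ X) (dualSysCone X C.cone) s ↔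
        ∀ Ψ ∈ dualSysCone X C.cone s, 0 ≤ tpair (Module.Dual ℝ X) s Φ Ψ :=
      fun Φ => mem_dualSysCone_iff (Module.Dual ℝ X) s (dualSysCone X C.cone) Φ
    have hEA : TensorProduct.map (Module.Dual.eval ℝ X) (LinearMap.id (M := HM (Fin s))) =
        (TensorProduct.congr (Module.evalEquiv ℝ X)
          (LinearEquiv.refl ℝ (HM (Fin s))) : _ →ₗ[ℝ] _) := by
      apply TensorProduct.ext'
      intro x B
      simp [TensorProduct.congr_tmul]
    ext Φ
    constructor
    · intro hΦ
      rw [memDD] at hΦ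
      set E := TensorProduct.congr (Module.evalEquiv ℝ X) (LinearEquiv.refl ℝ (HM (Fin s)))
        with hEdef
      set A := E.symm Φ with hAdef
      have hΦA : TensorProduct.map (Module.Dual.eval ℝ X) LinearMap.id A = Φ := by
        have h := congrArg (fun g : _ →ₗ[ℝ] _ => g A) hEA
        rw [h]
        show E A = Φ
        rw [hAdef]
        exact E.apply_symm_apply Φ
      have hAC : A ∈ C.cone s := by
        apply (C.proper s).2.2.1
        intro f hf
        obtain ⟨Ψ, rfl⟩ := (tpair_bijective X s).2 f
        have hΨD : Ψ ∈ dualSysCone X C.cone s := (memD s Ψ).mpr hf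
        calc (0 : ℝ) ≤ tpair (Module.Dual ℝ X) s Φ Ψ := hΦ Ψ hΨD
          _ = tpair X s Ψ A := by rw [← hΦA, tpair_symm]
      exact ⟨A, hAC, hΦA⟩
    · rintro ⟨A, hA, rfl⟩
      rw [memDD]
      intro Ψ hΨ
      rw [tpair_symm]
      exact (memD s Ψ).mp hΨ A hA
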